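/- Let v ∈ ℝⁿ, let Q̃ ∈ ℝ^{n×n} be symmetric with Q̃_{ii} ≤ 1 for all i and spectral norm ‖Q̃‖ ≤ n σ², and let A be a uniformly random b-element subset of {1,...,n}. Then E[v_{[A]}ᵀ Q̃ v_{[A]}] ≤ (b/n) β_b ‖v‖², where β_b := 1 + (b-1)(nσ² - 1)/(n-1). -/

import Mathlib

open Finset

lemma count_one {α : Type*} [DecidableEq α] (s : Finset α) (i : α) (hi : i ∈ s) (k : ℕ) :
    ((s.powersetCard (k+1)).filter (fun A => i ∈ A)).card = (s.card - 1).choose k := by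
  rw [← card_erase_of_mem hi, ← card_powersetCard]
  apply card_nbij' (fun A => A.erase i) (fun B => insert i B)
  · intro A hA
    simp only [mem_coe, mem_filter, mem_powersetCard] at hA
    rw [mem_coe, mem_powersetCard]
    exact ⟨erase_subset_erase i hA.1.1, by rw [card_erase_of_mem hA.2, hA.1.2]; omega⟩
  · intro B hB
    rw [mem_coe, mem_powersetCard] at hB
    simp only [mem_coe, mem_filter, mem_powersetCard]
    have hiB : i ∉ B := fun h => (mem_erase.mp (hB.1 h)).1 rfl
    refine ⟨⟨insert_subset hi (hB.1.trans (erase_subset i s)), ?_⟩, mem_insert_self i B⟩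
    rw [card_insert_of_notMem hiB, hB.2]
  · intro A hA
    simp only [mem_coe, mem_filter] at hA
    exact insert_erase hA.2
  · intro B hB
    rw [mem_coe, mem_powersetCard] at hB
    exact erase_insert (fun h => (mem_erase.mp (hB.1 h)).1 rfl)

lemma count_two {α : Type*} [DecidableEq α] (s : Finset α) (i j : α) (hi : i ∈ s) (hj : j ∈ s)
    (hij : i ≠ j) (k : ℕ) :
    ((s.powersetCard (k+2)).filter (fun A => i ∈ A ∧ j ∈ A)).card = (s.card - 2).choose k := by
  have h1 : ((s.powersetCard (k+2)).filter (fun A => i ∈ A ∧ j ∈ A)).card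
      = (((s.erase i).powersetCard (k+1)).filter (fun B => j ∈ B)).card := by
    apply card_nbij' (fun A => A.erase i) (fun B => insert i B)
    · intro A hA
      simp only [mem_coe, mem_filter, mem_powersetCard] at hA ⊢
      exact ⟨⟨erase_subset_erase i hA.1.1, by rw [card_erase_of_mem hA.2.1, hA.1.2]; omega⟩,
        mem_erase.mpr ⟨hij.symm, hA.2.2⟩⟩
    · intro B hB
      simp only [mem_coe, mem_filter, mem_powersetCard] at hB ⊢
      have hiB : i ∉ B := fun h => (mem_erase.mp (hB.1.1 h)).1 rfl
      refine ⟨⟨insert_subset hi (hB.1.1.trans (erase_subset i s)), ?_⟩, mem_insert_self i B,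
        mem_insert_of_mem hB.2⟩
      rw [card_insert_of_notMem hiB, hB.1.2]
    · intro A hA
      simp only [mem_coe, mem_filter] at hA
      exact insert_erase hA.2.1
    · intro B hB
      simp only [mem_coe, mem_filter, mem_powersetCard] at hB
      exact erase_insert (fun h => (mem_erase.mp (hB.1.1 h)).1 rfl)
  rw [h1, count_one (s.erase i) j (mem_erase.mpr ⟨hij.symm, hj⟩) k, card_erase_of_mem hi]
  congr 1

lemma quad_bound (n : ℕ) (Q : Matrix (Fin n) (Fin n) ℝ) (v : Fin n → ℝ) (c : ℝ)
    (hspec : ‖Matrix.toEuclideanCLM (𝕜 := ℝ) Q‖ ≤ c) :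
    ∑ i, ∑ j, v i * Q i j * v j ≤ c * ∑ i, (v i) ^ 2 := by
  set T := Matrix.toEuclideanCLM (𝕜 := ℝ) Q with hTdef
  set x : EuclideanSpace ℝ (Fin n) := (WithLp.equiv 2 _).symm v with hxdef
  have hT : T x = (WithLp.equiv 2 _).symm (Matrix.toLin' Q v) :=
    rfl
  have hinner : (inner ℝ x (T x) : ℝ) = ∑ i, ∑ j, v i * Q i j * v j := by
    rw [hT]
    simp only [PiLp.inner_apply, RCLike.inner_apply, conj_trivial,
      WithLp.equiv_symm_apply, PiLp.toLp_apply, Matrix.toLin'_apply, Matrix.mulVec, dotProduct, hxdef]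
    refine Finset.sum_congr rfl fun i _ => ?_
    rw [Finset.sum_mul]
    exact Finset.sum_congr rfl fun j _ => by ring
  have hx2 : ‖x‖ ^ 2 = ∑ i, (v i) ^ 2 := by
    rw [EuclideanSpace.norm_eq, Real.sq_sqrt (by positivity)]
    exact Finset.sum_congr rfl fun i _ => by simp [hxdef, Real.norm_eq_abs, sq_abs]
  rw [← hinner]
  calc (inner ℝ x (T x) : ℝ) ≤ ‖x‖ * ‖T x‖ := real_inner_le_norm x (T x)
    _ ≤ ‖x‖ * (‖T‖ * ‖x‖) := by
        have := T.le_opNorm x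
        nlinarith [norm_nonneg x, norm_nonneg (T x)]
    _ = ‖T‖ * ‖x‖ ^ 2 := by ring
    _ ≤ c * ∑ i, (v i)^2 := by
        rw [hx2]
        exact mul_le_mul_of_nonneg_right hspec (by positivity)

/-- Lemma 1 (second part): if `Q` is symmetric with unit-bounded diagonal and
spectral norm at most `n σ²`, then the expected censored quadratic form is at
most `(b/n) β_b ‖v‖²`, where `β_b = 1 + (b-1)(nσ²-1)/(n-1)`. -/
theorem stmt1 (n b : ℕ) (hn : 2 ≤ n) (hb1 : 1 ≤ b) (hbn : b ≤ n)
    (v : Fin n → ℝ) (Q : Matrix (Fin n) (Fin n) ℝ) (hsym : Q.IsSymm)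
    (hdiag : ∀ i, Q i i ≤ 1) (σ2 : ℝ) (hσ : 1 / (n : ℝ) ≤ σ2)
    (hspec : ‖Matrix.toEuclideanCLM (𝕜 := ℝ) Q‖ ≤ (n : ℝ) * σ2) :
    (∑ A ∈ Finset.powersetCard b (Finset.univ : Finset (Fin n)),
        ∑ i, ∑ j, (if i ∈ A then v i else 0) * Q i j * (if j ∈ A then v j else 0))
      / (n.choose b : ℝ)
    ≤ ((b : ℝ) / n) * (1 + ((b : ℝ) - 1) * ((n : ℝ) * σ2 - 1) / ((n : ℝ) - 1))
        * (∑ i, (v i) ^ 2) := by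
  classical
  have hn0 : (0:ℝ) < n := by positivity
  have hn1 : (0:ℝ) < (n:ℝ) - 1 := by
    have : (2:ℝ) ≤ n := by exact_mod_cast hn
    linarith
  set N : ℕ := n.choose b with hNdef
  have hNpos : 0 < N := Nat.choose_pos hbn
  have hN0 : (0:ℝ) < N := by exact_mod_cast hNpos
  set c1 : ℕ := (n-1).choose (b-1) with hc1def
  set mval : ℕ := (if b = 1 then 0 else (n-2).choose (b-2)) with hmdef
  set V : ℝ := ∑ i, (v i)^2 with hVdef
  set SQ : ℝ := ∑ i, ∑ j, v i * Q i j * v j with hSQdef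
  set D : ℝ := ∑ i, (v i)^2 * Q i i with hDdef
  -- counting
  have hcnt1 : ∀ i : Fin n,
      ((Finset.powersetCard b (Finset.univ : Finset (Fin n))).filter
        (fun A => i ∈ A)).card = c1 := by
    intro i
    obtain ⟨k, rfl⟩ : ∃ k, b = k + 1 := ⟨b - 1, by omega⟩
    rw [count_one univ i (mem_univ i) k, card_univ, Fintype.card_fin]
    simp [hc1def]
  have hcnt2 : ∀ i j : Fin n, i ≠ j →
      ((Finset.powersetCard b (Finset.univ : Finset (Fin n))).filter
        (fun A => i ∈ A ∧ j ∈ A)).card = mval := by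
    intro i j hij
    match b, hb1 with
    | 1, _ =>
      rw [show mval = 0 by simp [hmdef]]
      rw [Finset.card_eq_zero, Finset.filter_eq_empty_iff]
      intro A hA
      rw [mem_powersetCard] at hA
      obtain ⟨a, rfl⟩ := Finset.card_eq_one.mp hA.2
      rintro ⟨hiA, hjA⟩
      exact hij ((mem_singleton.mp hiA).trans (mem_singleton.mp hjA).symm)
    | (k+2), _ =>
      rw [count_two univ i j (mem_univ i) (mem_univ j) hij k, card_univ, Fintype.card_fin]
      simp [hmdef]
  -- numeric identities
  have hid1 : (c1 : ℝ) * n = (N : ℝ) * b := by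
    have h : n * c1 = N * b := by
      have := Nat.add_one_mul_choose_eq (n-1) (b-1)
      rw [show n-1+1 = n from by omega, show b-1+1 = b from by omega] at this
      simpa [hc1def, hNdef] using this
    calc (c1:ℝ) * n = ((n * c1 : ℕ) : ℝ) := by push_cast; ring
      _ = ((N * b : ℕ) : ℝ) := by rw [h]
      _ = (N:ℝ) * b := by push_cast; ring
  have hid2 : (mval : ℝ) * ((n:ℝ) * ((n:ℝ) - 1)) = (N : ℝ) * ((b:ℝ) * ((b:ℝ) - 1)) := by
    match b, hb1 with
    | 1, _ => simp [hmdef]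
    | (k+2), _ =>
      have hm' : mval = (n-2).choose k := by simp [hmdef]
      have e1 : n * (n-1).choose (k+1) = N * (k+2) := by
        have := Nat.add_one_mul_choose_eq (n-1) (k+1)
        rw [show n-1+1 = n from by omega] at this
        simpa [hNdef] using this
      have e2 : (n-1) * (n-2).choose k = (n-1).choose (k+1) * (k+1) := by
        have := Nat.add_one_mul_choose_eq (n-2) k
        rw [show n-2+1 = n - 1 from by omega] at this
        simpa using this
      have key : mval * (n * (n-1)) = N * ((k+2) * (k+1)) := by
        rw [hm']
        calc (n-2).choose k * (n * (n-1)) = n * ((n-1) * (n-2).choose k) := by ring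
          _ = n * ((n-1).choose (k+1) * (k+1)) := by rw [e2]
          _ = (n * (n-1).choose (k+1)) * (k+1) := by ring
          _ = (N * (k+2)) * (k+1) := by rw [e1]
          _ = N * ((k+2) * (k+1)) := by ring
      have hn1' : ((n-1 : ℕ) : ℝ) = (n:ℝ) - 1 := by
        push_cast [Nat.cast_sub (by omega : 1 ≤ n)]; ring
      have := congrArg (fun x : ℕ => (x : ℝ)) key
      push_cast [Nat.cast_sub (by omega : 1 ≤ n)] at this
      push_cast
      linarith [this]
  -- rewrite the big sum
  have hS : (∑ A ∈ Finset.powersetCard b (Finset.univ : Finset (Fin n)),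
        ∑ i, ∑ j, (if i ∈ A then v i else 0) * Q i j * (if j ∈ A then v j else 0))
      = (mval:ℝ) * SQ + ((c1:ℝ) - mval) * D := by
    have step1 : (∑ A ∈ Finset.powersetCard b (Finset.univ : Finset (Fin n)),
          ∑ i, ∑ j, (if i ∈ A then v i else 0) * Q i j * (if j ∈ A then v j else 0))
        = ∑ i, ∑ j, (v i * Q i j * v j) *
            (((Finset.powersetCard b (Finset.univ : Finset (Fin n))).filter
              (fun A => i ∈ A ∧ j ∈ A)).card : ℝ) := by
      rw [Finset.sum_comm]
      refine Finset.sum_congr rfl fun i _ => ?_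
      rw [Finset.sum_comm]
      refine Finset.sum_congr rfl fun j _ => ?_
      have : ∀ A : Finset (Fin n),
          (if i ∈ A then v i else 0) * Q i j * (if j ∈ A then v j else 0)
          = if i ∈ A ∧ j ∈ A then v i * Q i j * v j else 0 := by
        intro A
        by_cases h1 : i ∈ A <;> by_cases h2 : j ∈ A <;> simp [h1, h2]
      simp_rw [this]
      rw [← Finset.sum_filter, Finset.sum_const, nsmul_eq_mul, mul_comm]
    rw [step1]
    have hcnt : ∀ i j : Fin n,
        ((((Finset.powersetCard b (Finset.univ : Finset (Fin n))).filter
          (fun A => i ∈ A ∧ j ∈ A)).card : ℝ))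
        = if i = j then (c1:ℝ) else (mval:ℝ) := by
      intro i j
      by_cases h : i = j
      · subst h; simp only [and_self, if_pos rfl]; exact_mod_cast hcnt1 i
      · rw [if_neg h]; exact_mod_cast hcnt2 i j h
    calc ∑ i, ∑ j, (v i * Q i j * v j) *
            (((Finset.powersetCard b (Finset.univ : Finset (Fin n))).filter
              (fun A => i ∈ A ∧ j ∈ A)).card : ℝ)
        = ∑ i, ((∑ j, (v i * Q i j * v j) * mval)
            + (v i * Q i i * v i) * ((c1:ℝ) - mval)) := by
          refine Finset.sum_congr rfl fun i _ => ?_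
          calc ∑ j, (v i * Q i j * v j) *
                (((Finset.powersetCard b (Finset.univ : Finset (Fin n))).filter
                  (fun A => i ∈ A ∧ j ∈ A)).card : ℝ)
              = ∑ j, ((v i * Q i j * v j) * mval
                  + if i = j then (v i * Q i j * v j) * ((c1:ℝ) - mval) else 0) := by
                refine Finset.sum_congr rfl fun j _ => ?_
                rw [hcnt i j]
                split_ifs with h <;> ring
            _ = (∑ j, (v i * Q i j * v j) * mval)
                + ∑ j, (if i = j then (v i * Q i j * v j) * ((c1:ℝ) - mval) else 0) :=
                Finset.sum_add_distrib
            _ = (∑ j, (v i * Q i j * v j) * mval)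
                + (v i * Q i i * v i) * ((c1:ℝ) - mval) := by
                rw [Finset.sum_ite_eq]; simp
      _ = (mval:ℝ) * SQ + ((c1:ℝ) - mval) * D := by
          rw [Finset.sum_add_distrib, hSQdef, hDdef, Finset.mul_sum, Finset.mul_sum]
          congr 1
          · refine Finset.sum_congr rfl fun i _ => ?_
            rw [Finset.mul_sum]
            exact Finset.sum_congr rfl fun j _ => by ring
          · exact Finset.sum_congr rfl fun i _ => by ring
  rw [hS]
  -- bounds
  have hV0 : 0 ≤ V := by rw [hVdef]; positivity
  have hSQle : SQ ≤ ((n:ℝ) * σ2) * V := quad_bound n Q v _ hspec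
  have hDle : D ≤ V := by
    refine Finset.sum_le_sum fun i _ => ?_
    calc (v i)^2 * Q i i ≤ (v i)^2 * 1 :=
          mul_le_mul_of_nonneg_left (hdiag i) (sq_nonneg _)
      _ = (v i)^2 := mul_one _
  have hmlec1 : (mval:ℝ) ≤ c1 := by
    have hne : (⟨0, by omega⟩ : Fin n) ≠ (⟨1, by omega⟩ : Fin n) := by
      simp [Fin.ext_iff]
    have hsub : ((Finset.powersetCard b (Finset.univ : Finset (Fin n))).filter
        (fun A => (⟨0, by omega⟩ : Fin n) ∈ A ∧ (⟨1, by omega⟩ : Fin n) ∈ A))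
        ⊆ ((Finset.powersetCard b (Finset.univ : Finset (Fin n))).filter
        (fun A => (⟨0, by omega⟩ : Fin n) ∈ A)) := by
      intro A hA
      simp only [mem_filter] at hA ⊢
      exact ⟨hA.1, hA.2.1⟩
    have hcard := Finset.card_le_card hsub
    rw [hcnt2 _ _ hne, hcnt1] at hcard
    exact_mod_cast hcard
  have hm0 : (0:ℝ) ≤ mval := Nat.cast_nonneg _
  have hnσ1 : (1:ℝ) ≤ (n:ℝ) * σ2 := by
    rw [div_le_iff₀ hn0] at hσ
    linarith
  -- numerator bound
  have hnum : (mval:ℝ) * SQ + ((c1:ℝ) - mval) * D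
      ≤ (mval:ℝ) * (((n:ℝ) * σ2) * V) + ((c1:ℝ) - mval) * V := by
    gcongr
  have hfin : ((mval:ℝ) * (((n:ℝ) * σ2) * V) + ((c1:ℝ) - mval) * V) / N
      = ((b : ℝ) / n) * (1 + ((b : ℝ) - 1) * ((n : ℝ) * σ2 - 1) / ((n : ℝ) - 1)) * V := by
    have r1 : (c1:ℝ) / N = (b:ℝ) / n := by
      rw [div_eq_div_iff (ne_of_gt hN0) (ne_of_gt hn0)]
      linarith [hid1]
    have r2 : (mval:ℝ) / N = (b:ℝ) * ((b:ℝ) - 1) / ((n:ℝ) * ((n:ℝ) - 1)) := by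
      rw [div_eq_div_iff (ne_of_gt hN0) (by positivity)]
      linarith [hid2]
    have expand : ((mval:ℝ) * (((n:ℝ) * σ2) * V) + ((c1:ℝ) - mval) * V) / N
        = ((mval:ℝ)/N) * (((n:ℝ) * σ2) * V) + ((c1:ℝ)/N) * V - ((mval:ℝ)/N) * V := by
      field_simp
      ring
    rw [expand, r1, r2]
    field_simp
    ring
  calc ((mval:ℝ) * SQ + ((c1:ℝ) - mval) * D) / N
      ≤ ((mval:ℝ) * (((n:ℝ) * σ2) * V) + ((c1:ℝ) - mval) * V) / N := by gcongr
    _ = _ := hfin
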